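/- Let R be a fuzzy relation on a set U with a dually well-ordered spectrum, let α ∈ (0,1], and let R_α = {(x,y) ∈ U² | μ_R(x,y) ≥ α} be the α-section of R. Then for any subset A ⊆ U, the upper approximation of A by R_α satisfies A^{R_α} = {x ∈ U | μ_{[A]^R}(x) ≥ α}. -/
import Mathlib


open unitInterval

noncomputable section

instance : Fact ((0:ℝ) ≤ 1) := ⟨zero_le_one⟩

/-- A t-norm on the unit interval: commutative, associative, monotone in each
argument, with `1` as unit. -/
def IsTnorm (T : I → I → I) : Prop :=
  (∀ x y, T x y = T y x) ∧
  (∀ x y z, T (T x y) z = T x (T y z)) ∧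
  (∀ x₁ x₂ y, x₁ ≤ x₂ → T x₁ y ≤ T x₂ y) ∧
  (∀ x y₁ y₂, y₁ ≤ y₂ → T x y₁ ≤ T x y₂) ∧
  (∀ x, T x 1 = x)

/-- A fuzzy `T`-equivalence: reflexive, symmetric, `T`-transitive fuzzy relation. -/
def IsFuzzyTEquiv {U : Type*} (T : I → I → I) (μ : U → U → I) : Prop :=
  (∀ x, μ x x = 1) ∧ (∀ x y, μ x y = μ y x) ∧ (∀ x y z, T (μ x y) (μ y z) ≤ μ x z)

/-- Fuzzy upper approximation of a crisp set `A`: `sup {μ x y | y ∈ A}` (`sup ∅ = 0`). -/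
def upperApp {U : Type*} (μ : U → U → I) (A : Set U) (x : U) : I := sSup (μ x '' A)

/-- Fuzzy lower approximation of a crisp set `A`: `inf {1 - μ x y | y ∉ A}` (`inf ∅ = 1`). -/
def lowerApp {U : Type*} (μ : U → U → I) (A : Set U) (x : U) : I :=
  sInf ((fun y => σ (μ x y)) '' Aᶜ)

/-- The spectrum of a fuzzy relation. -/
def fuzzySpectrum {U : Type*} (μ : U → U → I) : Set I := {r | ∃ x y, μ x y = r}

/-- `R` has a dually well-ordered spectrum: every nonempty subset of the
spectrum has a greatest element. -/
def DuallyWellOrdered {U : Type*} (μ : U → U → I) : Prop :=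
  ∀ s ⊆ fuzzySpectrum μ, s.Nonempty → ∃ m ∈ s, ∀ r ∈ s, r ≤ m

/-- Upper approximation by the crisp equivalence `E = {(x,y) | μ x y = 1}`. -/
def upperE {U : Type*} (μ : U → U → I) (A : Set U) : Set U :=
  {x | ({y | μ x y = 1} ∩ A).Nonempty}

/-- Lower approximation by the crisp equivalence `E = {(x,y) | μ x y = 1}`. -/
def lowerE {U : Type*} (μ : U → U → I) (A : Set U) : Set U :=
  {x | {y | μ x y = 1} ⊆ A}

/-- Upper approximation by the support relation `S = {(x,y) | μ x y > 0}`. -/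
def upperS {U : Type*} (μ : U → U → I) (A : Set U) : Set U :=
  {x | ({y | 0 < μ x y} ∩ A).Nonempty}

/-- Lower approximation by the support relation `S = {(x,y) | μ x y > 0}`. -/
def lowerS {U : Type*} (μ : U → U → I) (A : Set U) : Set U :=
  {x | {y | 0 < μ x y} ⊆ A}

/-- `A^{R_α} = {x | μ_[A]^R(x) ≥ α}` for `α ∈ (0,1]`. -/
theorem stmt13 {U : Type*} (μ : U → U → I) (hD : DuallyWellOrdered μ)
    (α : I) (hα : 0 < α) (A : Set U) :
    {x : U | ({y : U | α ≤ μ x y} ∩ A).Nonempty} = {x : U | α ≤ upperApp μ A x} := by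
  ext x
  simp only [Set.mem_setOf_eq]
  constructor
  · rintro ⟨y, hy, hyA⟩
    exact le_trans hy (le_sSup ⟨y, hyA, rfl⟩)
  · intro h
    rcases A.eq_empty_or_nonempty with rfl | hA
    · simp only [upperApp, Set.image_empty, sSup_empty] at h
      exact absurd (lt_of_lt_of_le hα h) (lt_irrefl _)
    · obtain ⟨m, hm, hmax⟩ := hD (μ x '' A) (by rintro _ ⟨y, -, rfl⟩; exact ⟨x, y, rfl⟩)
        (hA.image _)
    -- sSup = m
      have hsup : sSup (μ x '' A) ≤ m := sSup_le hmax
      obtain ⟨y, hyA, hym⟩ := hm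
      exact ⟨y, show α ≤ μ x y from hym ▸ le_trans h hsup, hyA⟩
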